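/- Let ψ : ℝ → ℂ and f : ℝ → ℂ be integrable, and let j > 0. Then the function k ↦ W_ψ f(j,k) is integrable on ℝ, and its Fourier transform satisfies, for every ξ ∈ ℝ: ∫_ℝ e^{−2πiξk} W_ψ f(j,k) dk = j^{1/2} · conj(ψ̂(jξ)) · f̂(ξ). -/

import Mathlib

open MeasureTheory Complex

/-- The Fourier transform `ĝ(ξ) = ∫ e^{−2πiξt} g(t) dt`. -/
noncomputable def FT (g : ℝ → ℂ) (ξ : ℝ) : ℂ :=
  ∫ t : ℝ, Complex.exp (-(2 * Real.pi * ξ * t) * Complex.I) * g t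

/-- The continuous wavelet transform
`W_ψ f(j,k) = j^{−1/2} ∫ conj(ψ((t−k)/j)) f(t) dt`. -/
noncomputable def CWT (ψ f : ℝ → ℂ) (j k : ℝ) : ℂ :=
  ((Real.sqrt j : ℝ) : ℂ)⁻¹ * ∫ t : ℝ, (starRingEnd ℂ) (ψ ((t - k) / j)) * f t

open scoped Convolution

/-- If `ψ` and `f` are integrable and `j > 0`, then `k ↦ W_ψ f(j,k)` is integrable and its
Fourier transform is `ξ ↦ j^{1/2} · conj(ψ̂(jξ)) · f̂(ξ)`. -/
theorem cwt_integrable_and_fourier (ψ f : ℝ → ℂ)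
    (hψ : Integrable ψ) (hf : Integrable f) (j : ℝ) (hj : 0 < j) :
    Integrable (fun k : ℝ => CWT ψ f j k) ∧
    ∀ ξ : ℝ,
      (∫ k : ℝ, Complex.exp (-(2 * Real.pi * ξ * k) * Complex.I) * CWT ψ f j k)
        = ((Real.sqrt j : ℝ) : ℂ) * (starRingEnd ℂ) (FT ψ (j * ξ)) * FT f ξ := by
  have hj0 : j ≠ 0 := hj.ne'
  have hj' : (-j) ≠ 0 := neg_ne_zero.mpr hj0
  set g : ℝ → ℂ := fun x => (starRingEnd ℂ) (ψ (x / (-j))) with hgdef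
  have hg : Integrable g := by
    have h1 : Integrable (fun x : ℝ => ψ (x / (-j))) := hψ.comp_div hj'
    exact (Complex.conjCLE.toContinuousLinearMap).integrable_comp h1
  have key : ∀ k t : ℝ, (starRingEnd ℂ) (ψ ((t - k) / j)) = g (k - t) := by
    intro k t
    simp only [hgdef]
    rw [div_neg, ← neg_div, neg_sub]
  -- rewrite CWT as a constant times an explicit convolution-type integral
  have hCWT : ∀ k : ℝ, CWT ψ f j k
      = ((Real.sqrt j : ℝ) : ℂ)⁻¹ * ∫ t : ℝ, f t * g (k - t) := by
    intro k
    unfold CWT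
    congr 1
    refine integral_congr_ae (Filter.Eventually.of_forall fun t => ?_)
    show (starRingEnd ℂ) (ψ ((t - k) / j)) * f t = f t * g (k - t)
    rw [key k t, mul_comm]
  -- integrability of the convolution integrand on the product space
  have hprod : Integrable (fun p : ℝ × ℝ => f p.2 * g (p.1 - p.2))
      ((volume : Measure ℝ).prod volume) := by
    have := hf.convolution_integrand (ContinuousLinearMap.mul ℂ ℂ) hg
    simpa using this
  constructor
  · -- integrability of the CWT
    have hconv : Integrable (f ⋆[ContinuousLinearMap.mul ℂ ℂ] g) :=
      hf.integrable_convolution _ hg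
    have : (fun k : ℝ => CWT ψ f j k)
        = fun k => ((Real.sqrt j : ℝ) : ℂ)⁻¹ * (f ⋆[ContinuousLinearMap.mul ℂ ℂ] g) k := by
      funext k
      rw [hCWT k]
      simp [convolution]
    rw [this]
    exact hconv.const_mul _
  · intro ξ
    set c : ℝ → ℂ := fun x => Complex.exp (-(2 * Real.pi * ξ * x) * Complex.I) with hcdef
    have hc_norm : ∀ x : ℝ, ‖c x‖ = 1 := by
      intro x
      simp only [hcdef, Complex.norm_exp]
      have : ((-(2 * Real.pi * ξ * x) : ℂ) * Complex.I).re = 0 := by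
        have : ((2 : ℂ) * Real.pi * ξ * x) = ((2 * Real.pi * ξ * x : ℝ) : ℂ) := by push_cast; ring
        rw [neg_mul, this, Complex.neg_re, Complex.mul_I_re, Complex.ofReal_im]
        simp
      rw [this, Real.exp_zero]
    have hc_cont : Continuous c := by
      apply Complex.continuous_exp.comp
      fun_prop
    have hc_add : ∀ x y : ℝ, c (x + y) = c x * c y := by
      intro x y
      simp only [hcdef, ← Complex.exp_add]
      congr 1
      push_cast
      ring
    -- the full integrand on the product space is integrable
    have hF : Integrable (fun p : ℝ × ℝ => c p.1 * (f p.2 * g (p.1 - p.2)))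
        ((volume : Measure ℝ).prod volume) := by
      refine hprod.bdd_mul ?_ (Filter.Eventually.of_forall fun p => le_of_eq (hc_norm p.1))
      exact (hc_cont.comp continuous_fst).aestronglyMeasurable
    -- Fourier transform of g
    have hFTg : FT g ξ = (j : ℂ) * (starRingEnd ℂ) (FT ψ (j * ξ)) := by
      have hrw : (fun x : ℝ => c x * g x)
          = fun x : ℝ => (fun u : ℝ => c (-j * u) * (starRingEnd ℂ) (ψ u)) (x / (-j)) := by
        funext x
        simp only [hgdef]
        congr 2
        field_simp
      have h1 : FT g ξ = ∫ x : ℝ, c x * g x := rfl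
      rw [h1, hrw, MeasureTheory.Measure.integral_comp_div (fun u : ℝ => c (-j * u) * (starRingEnd ℂ) (ψ u)) (-j)]
      have habs : |(-j)| = j := by rw [abs_neg, abs_of_pos hj]
      have h2 : ∀ u : ℝ, c (-j * u) * (starRingEnd ℂ) (ψ u)
          = (starRingEnd ℂ) (Complex.exp (-(2 * Real.pi * (j * ξ) * u) * Complex.I) * ψ u) := by
        intro u
        rw [map_mul]
        congr 1
        rw [← Complex.exp_conj]
        simp only [hcdef]
        congr 1
        rw [map_mul, map_neg, Complex.conj_I]
        simp only [map_mul, Complex.conj_ofReal, map_ofNat]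
        push_cast
        ring
      simp_rw [h2]
      rw [integral_conj, habs]
      simp only [FT, real_smul]
      push_cast
      ring
    -- main Fubini computation
    have step1 : (∫ k : ℝ, c k * CWT ψ f j k)
        = ((Real.sqrt j : ℝ) : ℂ)⁻¹ * ∫ k : ℝ, ∫ t : ℝ, c k * (f t * g (k - t)) := by
      rw [← integral_const_mul]
      refine integral_congr_ae (Filter.Eventually.of_forall fun k => ?_)
      show c k * CWT ψ f j k = ((Real.sqrt j : ℝ) : ℂ)⁻¹ * ∫ t : ℝ, c k * (f t * g (k - t))
      rw [hCWT k, integral_const_mul (c k) (fun t => f t * g (k - t))]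
      ring
    have step2 : (∫ k : ℝ, ∫ t : ℝ, c k * (f t * g (k - t)))
        = ∫ t : ℝ, ∫ k : ℝ, c k * (f t * g (k - t)) :=
      integral_integral_swap hF
    have inner : ∀ t : ℝ, (∫ k : ℝ, c k * (f t * g (k - t)))
        = f t * (c t * FT g ξ) := by
      intro t
      have h1 : (∫ k : ℝ, c k * (f t * g (k - t)))
          = f t * ∫ k : ℝ, c k * g (k - t) := by
        rw [← integral_const_mul]
        refine integral_congr_ae (Filter.Eventually.of_forall fun k => ?_)
        ring
      rw [h1]
      congr 1
      have h2 : (∫ k : ℝ, c k * g (k - t)) = ∫ k : ℝ, c (k + t) * g k := by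
        rw [← integral_add_right_eq_self (fun k : ℝ => c k * g (k - t)) t]
        simp
      rw [h2]
      have h3 : ∀ k : ℝ, c (k + t) * g k = c t * (c k * g k) := by
        intro k
        rw [hc_add k t]
        ring
      simp_rw [h3]
      rw [integral_const_mul]
      rfl
    have hFTf : (∫ t : ℝ, f t * (c t * FT g ξ)) = FT g ξ * FT f ξ := by
      have : ∀ t : ℝ, f t * (c t * FT g ξ) = FT g ξ * (c t * f t) := by intro t; ring
      simp_rw [this]
      rw [integral_const_mul]
      rfl
    have hsqrt : ((Real.sqrt j : ℝ) : ℂ)⁻¹ * (j : ℂ) = ((Real.sqrt j : ℝ) : ℂ) := by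
      have hs : Real.sqrt j ≠ 0 := by positivity
      have : (j : ℂ) = ((Real.sqrt j : ℝ) : ℂ) * ((Real.sqrt j : ℝ) : ℂ) := by
        rw [← Complex.ofReal_mul, Real.mul_self_sqrt hj.le]
      rw [this, ← mul_assoc, inv_mul_cancel₀ (by exact_mod_cast hs), one_mul]
    calc (∫ k : ℝ, Complex.exp (-(2 * Real.pi * ξ * k) * Complex.I) * CWT ψ f j k)
        = ((Real.sqrt j : ℝ) : ℂ)⁻¹ * ∫ k : ℝ, ∫ t : ℝ, c k * (f t * g (k - t)) := step1
      _ = ((Real.sqrt j : ℝ) : ℂ)⁻¹ * ∫ t : ℝ, ∫ k : ℝ, c k * (f t * g (k - t)) := by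
            rw [step2]
      _ = ((Real.sqrt j : ℝ) : ℂ)⁻¹ * ∫ t : ℝ, f t * (c t * FT g ξ) := by
            congr 1
            exact integral_congr_ae (Filter.Eventually.of_forall fun t => inner t)
      _ = ((Real.sqrt j : ℝ) : ℂ)⁻¹ * (FT g ξ * FT f ξ) := by rw [hFTf]
      _ = ((Real.sqrt j : ℝ) : ℂ)⁻¹ * ((j : ℂ) * (starRingEnd ℂ) (FT ψ (j * ξ)) * FT f ξ) := by
            rw [hFTg]
      _ = (((Real.sqrt j : ℝ) : ℂ)⁻¹ * (j : ℂ)) * (starRingEnd ℂ) (FT ψ (j * ξ)) * FT f ξ := by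
            ring
      _ = ((Real.sqrt j : ℝ) : ℂ) * (starRingEnd ℂ) (FT ψ (j * ξ)) * FT f ξ := by
            rw [hsqrt]
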